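/- Let m ≥ n ≥ 1 and let Φ_m, Φ_n ∈ ℤ[t] be cyclotomic polynomials, and C_{Φ_n} the companion matrix of Φ_n. Then the Smith normal form of the integer matrix Φ_m(C_{Φ_n}) is: the zero matrix if m = n; p·I if m = n·p^k for a prime p and k ≥ 1; and the identity matrix I otherwise. -/

import Mathlib

open Polynomial Matrix

def companion {R : Type*} [CommRing R] (g : R[X]) :
    Matrix (Fin g.natDegree) (Fin g.natDegree) R :=
  Matrix.of fun i j =>
    if (i : ℕ) = 0 then -g.coeff (g.natDegree - 1 - (j : ℕ))
    else if (i : ℕ) = (j : ℕ) + 1 then 1 else 0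

open Finset


section Aux

def Bmat {R : Type*} [CommRing R] (d : ℕ) (c : ℕ → R) (t : R) :
    Matrix (Fin d) (Fin d) R :=
  Matrix.of fun i j =>
    (if (i : ℕ) = 0 then -c (d - 1 - (j : ℕ)) else if (i : ℕ) = (j : ℕ) + 1 then 1 else 0)
      - (if i = j then t else 0)

theorem det_Bmat {R : Type*} [CommRing R] :
    ∀ (d : ℕ), 1 ≤ d → ∀ (c : ℕ → R) (t : R),
    (Bmat d c t).det = (-1) ^ d * (t ^ d + ∑ i ∈ Finset.range d, c i * t ^ i)
  | 0, h => by omega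
  | 1, _ => by
    intro c t
    simp [Bmat, Matrix.det_fin_one, Matrix.of_apply]
    ring
  | (e + 2), _ => by
    intro c t
    have ih := det_Bmat (e + 1) (by omega) (fun i => c (i + 1)) t
    rw [Matrix.det_succ_column (Bmat (e+2) c t) (Fin.last (e+1))]
    have hlast0 : (Fin.last (e+1) : Fin (e+2)) ≠ 0 := by
      simp [Fin.ext_iff]
    rw [Finset.sum_eq_add_of_mem (0 : Fin (e+2)) (Fin.last (e+1)) (Finset.mem_univ _)
      (Finset.mem_univ _) (Ne.symm hlast0) ?_]
    · -- main computation
      have hminor1 : ((Bmat (e+2) c t).submatrix (Fin.succAbove 0)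
          (Fin.succAbove (Fin.last (e+1)))).det = 1 := by
        rw [Matrix.det_of_upperTriangular]
        · refine Finset.prod_eq_one fun i _ => ?_
          simp only [Matrix.submatrix_apply, Fin.succAbove_zero, Fin.succAbove_last, Bmat,
            Matrix.of_apply, Fin.val_succ, Fin.coe_castSucc]
          rw [if_neg (by omega), if_pos trivial, if_neg (by simp [Fin.ext_iff])]
          norm_num
        · intro i j hij
          have hij' : (j : ℕ) < (i : ℕ) := hij
          simp only [Matrix.submatrix_apply, Fin.succAbove_zero, Fin.succAbove_last, Bmat,
            Matrix.of_apply, Fin.val_succ, Fin.coe_castSucc]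
          rw [if_neg (by omega), if_neg (by omega), if_neg (by simp [Fin.ext_iff]; omega)]
          ring
      have hminor2 : ((Bmat (e+2) c t).submatrix (Fin.succAbove (Fin.last (e+1)))
          (Fin.succAbove (Fin.last (e+1)))) = Bmat (e+1) (fun i => c (i + 1)) t := by
        ext i j
        have hj : (j : ℕ) < e + 1 := j.isLt
        simp only [Matrix.submatrix_apply, Fin.succAbove_last, Bmat, Matrix.of_apply,
          Fin.coe_castSucc, Fin.castSucc_inj]
        by_cases h0 : (i : ℕ) = 0
        · rw [if_pos h0, if_pos h0, show e + 2 - 1 - (j:ℕ) = (e + 1 - 1 - (j:ℕ)) + 1 by omega]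
        · rw [if_neg h0, if_neg h0]
      rw [hminor1, hminor2, ih]
      have hB0 : Bmat (e+2) c t 0 (Fin.last (e+1)) = -c 0 := by
        simp only [Bmat, Matrix.of_apply, Fin.val_zero, if_pos rfl]
        rw [if_pos trivial, if_neg (Ne.symm hlast0), show e + 2 - 1 - ((Fin.last (e+1) : Fin (e+2)) : ℕ) = 0 by
          simp]
        ring
      have hBl : Bmat (e+2) c t (Fin.last (e+1)) (Fin.last (e+1)) = -t := by
        simp only [Bmat, Matrix.of_apply, Fin.val_last]
        rw [if_neg (by omega), if_neg (by omega), if_pos trivial]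
        ring
      rw [hB0, hBl]
      simp only [Fin.val_last, Fin.val_zero, zero_add]
      rw [show ((-1 : R)) ^ ((e+1) + (e+1)) = 1 from Even.neg_one_pow ⟨e+1, rfl⟩]
      have hsum : ∑ i ∈ Finset.range (e+2), c i * t ^ i
          = (∑ i ∈ Finset.range (e+1), c (i+1) * t ^ i) * t + c 0 := by
        rw [Finset.sum_range_succ', Finset.sum_mul]
        congr 1
        · refine Finset.sum_congr rfl fun i _ => ?_
          rw [pow_succ]; ring
        · simp
      rw [hsum]
      ring
    · intro i _ hi
      obtain ⟨hi0, hil⟩ := hi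
      have : Bmat (e+2) c t i (Fin.last (e+1)) = 0 := by
        simp only [Bmat, Matrix.of_apply]
        rw [if_neg (Fin.val_ne_zero_iff.mpr hi0), if_neg ?_, if_neg hil]
        · ring
        · simp only [Fin.val_last]
          have := i.isLt
          omega
      rw [this]
      ring

variable {R S : Type*} [CommRing R] [CommRing S]

lemma companion_map_sub_smul_eq_Bmat (g : R[X]) (σ : R →+* S) (t : S) :
    (companion g).map σ - t • 1 = Bmat g.natDegree (fun i => σ (g.coeff i)) t := by
  ext i j
  simp only [Matrix.sub_apply, Matrix.map_apply, Matrix.smul_apply, Matrix.one_apply,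
    companion, Bmat, Matrix.of_apply, smul_eq_mul, mul_ite, mul_one, mul_zero]
  congr 1
  split_ifs with h1 h2 <;> simp

lemma eval_map_monic (g : R[X]) (hg : g.Monic) (σ : R →+* S) (t : S) :
    (g.map σ).eval t = t ^ g.natDegree + ∑ i ∈ Finset.range g.natDegree, σ (g.coeff i) * t ^ i := by
  rw [Polynomial.eval_map, Polynomial.eval₂_eq_sum_range, Finset.sum_range_succ,
    hg.coeff_natDegree, σ.map_one]
  ring

lemma det_companion_map_sub_smul (g : R[X]) (hg : g.Monic) (h1 : 1 ≤ g.natDegree)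
    (σ : R →+* S) (t : S) :
    ((companion g).map σ - t • 1).det = (-1) ^ g.natDegree * (g.map σ).eval t := by
  rw [companion_map_sub_smul_eq_Bmat, det_Bmat _ h1, eval_map_monic g hg]

lemma det_smul_one_sub_companion_map (g : R[X]) (hg : g.Monic) (h1 : 1 ≤ g.natDegree)
    (σ : R →+* S) (t : S) :
    (t • 1 - (companion g).map σ).det = (g.map σ).eval t := by
  have : t • (1 : Matrix (Fin g.natDegree) (Fin g.natDegree) S) - (companion g).map σ
      = -((companion g).map σ - t • 1) := (neg_sub _ _).symm
  rw [this, Matrix.det_neg, det_companion_map_sub_smul g hg h1, Fintype.card_fin, ← mul_assoc,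
    ← pow_add, show g.natDegree + g.natDegree = 2 * g.natDegree by ring, pow_mul]
  norm_num

lemma charpoly_companion (g : R[X]) (hg : g.Monic) (h1 : 1 ≤ g.natDegree) :
    (companion g).charpoly = g := by
  have hch : charmatrix (companion g) = (X : R[X]) • (1 : Matrix (Fin g.natDegree) (Fin g.natDegree) R[X]) - (companion g).map C := by
    ext i j
    by_cases h : i = j
    · subst h
      simp [charmatrix_apply_eq, Matrix.sub_apply, Matrix.smul_apply, Matrix.one_apply,
        smul_eq_mul]
    · simp [charmatrix_apply_ne _ _ _ h, Matrix.sub_apply, Matrix.smul_apply,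
        Matrix.one_apply_ne h, smul_eq_mul]
  rw [Matrix.charpoly, hch, det_smul_one_sub_companion_map g hg h1, Polynomial.eval_map,
    Polynomial.eval₂_C_X]

lemma aeval_companion_self (g : R[X]) (hg : g.Monic) (h1 : 1 ≤ g.natDegree) :
    Polynomial.aeval (companion g) g = 0 := by
  have h := Matrix.aeval_self_charpoly (companion g)
  rwa [charpoly_companion g hg h1] at h

lemma map_aeval_matrix {N : ℕ} (σ : ℤ →+* S) (A : Matrix (Fin N) (Fin N) ℤ) (f : ℤ[X]) :
    (Polynomial.aeval A f).map σ = Polynomial.aeval (A.map σ) f := by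
  have := Polynomial.aeval_algHom_apply (σ.mapMatrix.toIntAlgHom
    (R := Matrix (Fin N) (Fin N) ℤ) (S := Matrix (Fin N) (Fin N) S)) A f
  simp only [RingHom.toIntAlgHom_apply, RingHom.mapMatrix_apply] at this
  exact this.symm

lemma det_aeval_multiset {N : ℕ} (A : Matrix (Fin N) (Fin N) ℂ) (s : Multiset ℂ) :
    (Polynomial.aeval A (s.map (fun ξ => X - C ξ)).prod).det
      = (s.map (fun ξ => (A - ξ • 1).det)).prod := by
  induction s using Multiset.induction with
  | empty => simp
  | cons a s ih =>
    simp only [Multiset.map_cons, Multiset.prod_cons, _root_.map_mul, Matrix.det_mul, ih]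
    congr 2
    rw [_root_.map_sub, Polynomial.aeval_X, Polynomial.aeval_C,
      Algebra.algebraMap_eq_smul_one]

noncomputable def Complex.abs : AbsoluteValue ℂ ℝ where
  toFun z := ‖z‖
  map_mul' := norm_mul
  nonneg' := norm_nonneg
  eq_zero' _ := norm_eq_zero
  add_le' := norm_add_le

lemma Complex.abs_intCast (n : ℤ) : Complex.abs (n : ℂ) = |(n : ℝ)| := Complex.norm_intCast n

lemma detM_abs (m n : ℕ) (hn : 1 ≤ n) (hm : 1 ≤ m) :
    (((Polynomial.aeval (companion (cyclotomic n ℤ)) (cyclotomic m ℤ)).det.natAbs : ℝ))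
      = ∏ ξ ∈ primitiveRoots m ℂ, Complex.abs ((cyclotomic n ℂ).eval ξ) := by
  have hg : (cyclotomic n ℤ).Monic := cyclotomic.monic n ℤ
  have hdeg : 1 ≤ (cyclotomic n ℤ).natDegree := by
    rw [natDegree_cyclotomic]
    exact Nat.totient_pos.mpr hn
  set σ : ℤ →+* ℂ := Int.castRingHom ℂ with hσ
  set A' : Matrix (Fin (cyclotomic n ℤ).natDegree) (Fin (cyclotomic n ℤ).natDegree) ℂ :=
    (companion (cyclotomic n ℤ)).map σ with hA'
  have key : (((Polynomial.aeval (companion (cyclotomic n ℤ)) (cyclotomic m ℤ)).det : ℤ) : ℂ)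
      = ∏ ξ ∈ primitiveRoots m ℂ,
          ((-1 : ℂ) ^ (cyclotomic n ℤ).natDegree * (cyclotomic n ℂ).eval ξ) := by
    rw [show (((Polynomial.aeval (companion (cyclotomic n ℤ)) (cyclotomic m ℤ)).det : ℤ) : ℂ)
        = σ (Polynomial.aeval (companion (cyclotomic n ℤ)) (cyclotomic m ℤ)).det from rfl,
      RingHom.map_det, RingHom.mapMatrix_apply, map_aeval_matrix]
    have h2 : Polynomial.aeval A' (cyclotomic m ℤ) = Polynomial.aeval A' (cyclotomic m ℂ) := by
      rw [← map_cyclotomic_int m ℂ, ← algebraMap_int_eq, Polynomial.aeval_map_algebraMap]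
    rw [h2, cyclotomic_eq_prod_X_sub_primitiveRoots
      (Complex.isPrimitiveRoot_exp m (by omega)), Finset.prod_eq_multiset_prod,
      det_aeval_multiset, ← Finset.prod_eq_multiset_prod]
    refine Finset.prod_congr rfl fun ξ _ => ?_
    rw [show cyclotomic n ℂ = (cyclotomic n ℤ).map σ from (map_cyclotomic_int n ℂ).symm]
    exact det_companion_map_sub_smul _ hg hdeg σ ξ
  have habs := congrArg Complex.abs key
  rw [map_prod] at habs
  rw [Nat.cast_natAbs, Int.cast_abs, ← Complex.abs_intCast, habs]
  refine Finset.prod_congr rfl fun ξ _ => ?_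
  rw [_root_.map_mul, _root_.map_pow]
  simp

lemma pow_mod_eq {η : ℂ} {M : ℕ} (hη : η ^ M = 1) (a : ℕ) : η ^ (a % M) = η ^ a := by
  conv_rhs => rw [← Nat.div_add_mod a M, pow_add, pow_mul, hη, one_pow, one_mul]

lemma prod_units_eq_prod_primRoots {k : ℕ} [NeZero k] {ζ : ℂ} (hζ : IsPrimitiveRoot ζ k)
    (f : ℂ → ℝ) :
    ∏ u : (ZMod k)ˣ, f (ζ ^ ((u : ZMod k).val)) = ∏ ξ ∈ primitiveRoots k ℂ, f ξ := by
  have hk : 1 ≤ k := Nat.one_le_iff_ne_zero.mpr (NeZero.ne k)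
  refine Finset.prod_bij (fun u _ => ζ ^ ((u : ZMod k).val)) ?_ ?_ ?_ ?_
  · intro u _
    exact (mem_primitiveRoots (by omega)).2 (hζ.pow_of_coprime _ (ZMod.val_coe_unit_coprime u))
  · intro u _ v _ h
    have h2 := hζ.pow_inj (ZMod.val_lt _) (ZMod.val_lt _) h
    ext
    exact (ZMod.natCast_rightInverse (u : ZMod k)).symm.trans
      (by rw [h2, ZMod.natCast_rightInverse (v : ZMod k)])
  · intro ξ hξ
    have hξ' := (mem_primitiveRoots (by omega : 0 < k)).1 hξ
    obtain ⟨i, hik, hicop, rfl⟩ := (hζ.isPrimitiveRoot_iff).1 hξ'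
    refine ⟨ZMod.unitOfCoprime i hicop, Finset.mem_univ _, ?_⟩
    have hval : ((ZMod.unitOfCoprime i hicop : (ZMod k)ˣ) : ZMod k).val = i % k := by
      simp [ZMod.unitOfCoprime, ZMod.val_natCast]
    show ζ ^ ((ZMod.unitOfCoprime i hicop : (ZMod k)ˣ) : ZMod k).val = ζ ^ i
    rw [hval, pow_mod_eq (hζ.pow_eq_one)]
  · intro u _
    rfl

lemma prod_comp_surjective {G G' : Type*} [CommGroup G] [CommGroup G'] [Fintype G] [Fintype G']
    [DecidableEq G'] (π : G →* G') (hπ : Function.Surjective π) (f : G' → ℝ) :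
    ∏ u : G, f (π u) = (∏ v : G', f v) ^ (Fintype.card G / Fintype.card G') := by
  have hker : ∀ y : G', (Finset.univ.filter (fun u => π u = y)).card
      = Fintype.card G / Fintype.card G' := by
    intro y
    obtain ⟨x₀, rfl⟩ := hπ y
    have hcard : (Finset.univ.filter (fun u => π u = π x₀)).card
        = Fintype.card π.ker := by
      rw [← Fintype.card_subtype]
      refine Fintype.card_congr ⟨fun u => ⟨u.1 * x₀⁻¹, ?_⟩, fun v => ⟨v.1 * x₀, ?_⟩, ?_, ?_⟩
      · have := u.2
        simp [MonoidHom.mem_ker, _root_.map_mul, this]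
      · have := v.2
        simp only [MonoidHom.mem_ker] at this
        simp [_root_.map_mul, this]
      · intro u; ext; simp [mul_assoc]
      · intro v; ext; simp [mul_assoc]
    rw [hcard]
    have h1 : Fintype.card G = Fintype.card G' * Fintype.card π.ker := by
      rw [← Nat.card_eq_fintype_card, ← Nat.card_eq_fintype_card, ← Nat.card_eq_fintype_card,
        Subgroup.card_eq_card_quotient_mul_card_subgroup π.ker]
      congr 1
      exact Nat.card_congr (QuotientGroup.quotientKerEquivOfSurjective π hπ).toEquiv
    rw [h1, Nat.mul_div_cancel_left _ Fintype.card_pos]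
  rw [Finset.prod_comp f π, Finset.image_univ_of_surjective hπ, ← Finset.prod_pow]
  exact Finset.prod_congr rfl fun v _ => by rw [hker v]

lemma Habs_eq (m n₁ : ℕ) (hm : 1 ≤ m) (hn₁ : 1 ≤ n₁) :
    ∏ ξ ∈ primitiveRoots m ℂ, Complex.abs (ξ ^ n₁ - 1)
      = (((Polynomial.eval 1 (cyclotomic (m / m.gcd n₁) ℤ)).natAbs : ℝ))
          ^ (Nat.totient m / Nat.totient (m / m.gcd n₁)) := by
  haveI : NeZero m := ⟨by omega⟩
  obtain ⟨ζ, hζ⟩ : ∃ ζ : ℂ, IsPrimitiveRoot ζ m :=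
    ⟨_, Complex.isPrimitiveRoot_exp m (by omega)⟩
  set g := m.gcd n₁ with hg
  have hgpos : 0 < g := Nat.gcd_pos_of_pos_left _ hm
  have hgm : g ∣ m := Nat.gcd_dvd_left m n₁
  have hgn : g ∣ n₁ := Nat.gcd_dvd_right m n₁
  set M₁ := m / g with hM₁
  have hM₁pos : 0 < M₁ := Nat.div_pos (Nat.le_of_dvd hm hgm) hgpos
  haveI : NeZero M₁ := ⟨by omega⟩
  have hM₁m : M₁ ∣ m := ⟨g, (Nat.div_mul_cancel hgm).symm⟩
  set η : ℂ := ζ ^ n₁ with hη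
  have hηprim : IsPrimitiveRoot η M₁ := by
    have h1 : IsPrimitiveRoot (ζ ^ g) M₁ := hζ.pow (by omega) (Nat.mul_div_cancel' hgm).symm
    have h2 := h1.pow_of_coprime (n₁ / g) (Nat.coprime_div_gcd_div_gcd hgpos).symm
    rw [← pow_mul, Nat.mul_div_cancel' hgn] at h2
    exact h2
  rw [← prod_units_eq_prod_primRoots hζ (fun ξ => Complex.abs (ξ ^ n₁ - 1))]
  have hπ := ZMod.unitsMap_surjective (n := M₁) hM₁m
  have key : ∀ u : (ZMod m)ˣ, Complex.abs ((ζ ^ ((u : ZMod m).val)) ^ n₁ - 1)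
      = Complex.abs (η ^ (((ZMod.unitsMap hM₁m u : (ZMod M₁)ˣ) : ZMod M₁).val) - 1) := by
    intro u
    congr 2
    have h1 : ((ZMod.unitsMap hM₁m u : (ZMod M₁)ˣ) : ZMod M₁)
        = (((u : ZMod m).val : ℕ) : ZMod M₁) := by
      rw [ZMod.unitsMap_def]
      simp only [Units.coe_map, MonoidHom.coe_coe]
      conv_lhs => rw [← ZMod.natCast_rightInverse (u : ZMod m)]
      rw [map_natCast]
    rw [h1, ZMod.val_natCast, pow_mod_eq hηprim.pow_eq_one, ← pow_mul, ← pow_mul, mul_comm]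
  rw [Finset.prod_congr rfl (fun u _ => key u)]
  rw [prod_comp_surjective (ZMod.unitsMap hM₁m) hπ
    (fun v => Complex.abs (η ^ ((v : ZMod M₁).val) - 1))]
  rw [ZMod.card_units_eq_totient, ZMod.card_units_eq_totient]
  congr 1
  rw [prod_units_eq_prod_primRoots hηprim (fun τ => Complex.abs (τ - 1))]
  have hcyc : Polynomial.eval 1 (cyclotomic M₁ ℂ) = ∏ τ ∈ primitiveRoots M₁ ℂ, (1 - τ) := by
    rw [cyclotomic_eq_prod_X_sub_primitiveRoots hηprim, Polynomial.eval_prod]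
    exact Finset.prod_congr rfl fun τ _ => by simp
  have habs : ∏ τ ∈ primitiveRoots M₁ ℂ, Complex.abs (τ - 1)
      = Complex.abs (Polynomial.eval 1 (cyclotomic M₁ ℂ)) := by
    rw [hcyc, map_prod]
    exact Finset.prod_congr rfl fun τ _ => by rw [Complex.abs.map_sub]
  rw [habs, show cyclotomic M₁ ℂ = (cyclotomic M₁ ℤ).map (Int.castRingHom ℂ) from
    (map_cyclotomic_int M₁ ℂ).symm]
  rw [show ((1 : ℂ)) = (((1 : ℤ) : ℂ)) by norm_num, Polynomial.eval_intCast_map]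
  show Complex.abs ((eval 1 (cyclotomic M₁ ℤ) : ℤ) : ℂ) = _
  rw [Complex.abs_intCast, Nat.cast_natAbs, Int.cast_abs]

/-- `Vn m d` : contribution of divisor `d`. -/
noncomputable def Vn (m d : ℕ) : ℕ :=
  if d ∣ m then ((Polynomial.eval 1 (cyclotomic (m / d) ℤ)).natAbs) ^ d.totient else 1

lemma Vn_eq_one_of_not_primePow {m d : ℕ} (hd : 1 ≤ d) (hdm : d < m)
    (h : ∀ p j : ℕ, p.Prime → 1 ≤ j → m ≠ d * p ^ j) : Vn m d = 1 := by
  unfold Vn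
  split_ifs with hdvd
  · have hmd : m = d * (m / d) := (Nat.mul_div_cancel' hdvd).symm
    rw [Polynomial.eval_one_cyclotomic_not_prime_pow, Int.natAbs_one, one_pow]
    intro p hp k hk
    rcases Nat.eq_zero_or_pos k with rfl | hkpos
    · simp only [pow_zero] at hk
      rw [← hk, mul_one] at hmd
      omega
    · exact h p k hp hkpos (by rw [hk]; exact hmd)
  · rfl

lemma Vn_eq_of_primePow {m d p j : ℕ} (hd : 1 ≤ d) (hp : p.Prime) (hj : 1 ≤ j)
    (hm : m = d * p ^ j) : Vn m d = p ^ d.totient := by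
  haveI : Fact p.Prime := ⟨hp⟩
  have hdvd : d ∣ m := ⟨p ^ j, hm⟩
  have hd0 : d ≠ 0 := by omega
  unfold Vn
  rw [if_pos hdvd, hm, Nat.mul_div_cancel_left _ (Nat.pos_of_ne_zero hd0),
    show j = (j - 1) + 1 by omega, Polynomial.eval_one_cyclotomic_prime_pow]
  simp

lemma prodV (m n : ℕ) (hn : 1 ≤ n) (hnm : n < m) :
    ∏ d ∈ n.divisors, Vn m d
      = ((Polynomial.eval 1 (cyclotomic (m / m.gcd n) ℤ)).natAbs)
          ^ (m.totient / (m / m.gcd n).totient) := by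
  have hm : 1 ≤ m := by omega
  set g := m.gcd n with hgdef
  have hgpos : 0 < g := Nat.gcd_pos_of_pos_left _ hm
  have hgm : g ∣ m := Nat.gcd_dvd_left m n
  have hgn : g ∣ n := Nat.gcd_dvd_right m n
  set M₁ := m / g with hM₁def
  have hmfac : m = g * M₁ := (Nat.mul_div_cancel' hgm).symm
  have hM₁pos : 0 < M₁ := Nat.div_pos (Nat.le_of_dvd hm hgm) hgpos
  have hM₁2 : 2 ≤ M₁ := by
    by_contra h
    have h1 : M₁ = 1 := by omega
    rw [h1, mul_one] at hmfac
    have := Nat.le_of_dvd (by omega : 0 < n) hgn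
    omega
  -- key divisibility: for d ∣ n with d ∣ m, M₁ ∣ m / d
  have hM₁dvd : ∀ d, d ∣ n → d ∣ m → M₁ ∣ m / d := by
    intro d hdn hdm
    have hdg : d ∣ g := Nat.dvd_gcd hdm hdn
    obtain ⟨c, hc⟩ := hdg
    have hd0 : 0 < d := Nat.pos_of_dvd_of_pos hdm hm
    have : m = d * (c * M₁) := by rw [hmfac, hc]; ring
    rw [this, Nat.mul_div_cancel_left _ hd0]
    exact ⟨c, mul_comm _ _⟩
  by_cases hPP : ∃ q s : ℕ, q.Prime ∧ 1 ≤ s ∧ M₁ = q ^ s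
  · obtain ⟨q, s, hq, hs, hqs⟩ := hPP
    haveI : Fact q.Prime := ⟨hq⟩
    set t := m.factorization q with htdef
    set m₀ := m / q ^ t with hm₀def
    have hmfac0 : q ^ t * m₀ = m := Nat.ordProj_mul_ordCompl_eq_self m q
    have hqm₀ : ¬ q ∣ m₀ := Nat.not_dvd_ordCompl hq (by omega)
    have hm₀pos : 0 < m₀ := Nat.ordCompl_pos q (by omega)
    have hst : s ≤ t := by
      have hM₁m : M₁ ∣ m := ⟨g, by rw [hmfac]; ring⟩
      have h2 : q ^ s ∣ m := by rw [← hqs]; exact hM₁m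
      exact (Nat.Prime.pow_dvd_iff_le_factorization hq (by omega)).1 h2
    have hgval : g = q ^ (t - s) * m₀ := by
      have h1 : (q ^ (t - s) * m₀) * M₁ = m := by
        rw [hqs, show q ^ (t - s) * m₀ * q ^ s = q ^ (t - s) * q ^ s * m₀ by ring,
          pow_sub_mul_pow q hst, hmfac0]
      exact Nat.eq_of_mul_eq_mul_right hM₁pos (hmfac.symm.trans h1.symm)
    have hE : (Polynomial.eval 1 (cyclotomic M₁ ℤ)).natAbs = q := by
      rw [hqs, show s = (s - 1) + 1 by omega, Polynomial.eval_one_cyclotomic_prime_pow]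
      simp
    -- the support set
    set S : Finset ℕ := (q ^ (t - s)).divisors.image (· * m₀) with hSdef
    have hSsub : S ⊆ n.divisors := by
      intro d hd
      simp only [hSdef, Finset.mem_image, Nat.mem_divisors] at hd
      obtain ⟨e, ⟨hed, _⟩, rfl⟩ := hd
      rw [Nat.mem_divisors]
      exact ⟨dvd_trans (mul_dvd_mul_right hed m₀) (hgval ▸ hgn), by omega⟩
    have hmemS : ∀ d, d ∈ S ↔ ∃ i ≤ t - s, d = q ^ i * m₀ := by
      intro d
      simp only [hSdef, Finset.mem_image, Nat.mem_divisors]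
      constructor
      · rintro ⟨e, ⟨hed, _⟩, rfl⟩
        obtain ⟨i, hi, rfl⟩ := (Nat.dvd_prime_pow hq).1 hed
        exact ⟨i, hi, rfl⟩
      · rintro ⟨i, hi, rfl⟩
        exact ⟨q ^ i, ⟨pow_dvd_pow q hi, (pow_pos hq.pos _).ne'⟩, rfl⟩
    have hprod1 : ∏ d ∈ n.divisors, Vn m d = ∏ d ∈ S, Vn m d := by
      refine (Finset.prod_subset hSsub ?_).symm
      intro d hd hdS
      have hddvdn : d ∣ n := (Nat.mem_divisors.1 hd).1
      have hd1 : 1 ≤ d := Nat.pos_of_dvd_of_pos hddvdn (by omega)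
      have hdlt : d < m := lt_of_le_of_lt (Nat.le_of_dvd (by omega) hddvdn) hnm
      refine Vn_eq_one_of_not_primePow hd1 hdlt ?_
      intro p j hp hj hmdp
      -- then m / d = p ^ j, and M₁ = q ^ s divides it, so p = q, and d ∈ S
      have hdm : d ∣ m := ⟨p ^ j, hmdp⟩
      have hmd : m / d = p ^ j := by rw [hmdp, Nat.mul_div_cancel_left _ (by omega)]
      have hM₁pj : M₁ ∣ p ^ j := hmd ▸ hM₁dvd d hddvdn hdm
      have hpq : q = p := by
        have hqpj : q ∣ p ^ j := dvd_trans (by rw [hqs]; exact dvd_pow_self q (by omega)) hM₁pj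
        exact (Nat.prime_dvd_prime_iff_eq hq hp).1 (hq.dvd_of_dvd_pow hqpj)
      subst hpq
      have hsj : s ≤ j := by
        have h2 : q ^ s ∣ q ^ j := by rw [← hqs]; exact hM₁pj
        have h3 := (Nat.Prime.pow_dvd_iff_le_factorization hq (pow_pos hq.pos j).ne').1 h2
        rwa [hq.factorization_pow, Finsupp.single_eq_same] at h3
      have hjt : j ≤ t := by
        have h2 : q ^ j ∣ m := ⟨d, by rw [hmdp]; ring⟩
        exact (Nat.Prime.pow_dvd_iff_le_factorization hq (by omega)).1 h2
      have hdval : d = q ^ (t - j) * m₀ := by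
        have h1 : (q ^ (t - j) * m₀) * q ^ j = m := by
          rw [show q ^ (t - j) * m₀ * q ^ j = q ^ (t - j) * q ^ j * m₀ by ring,
            pow_sub_mul_pow q hjt, hmfac0]
        have h2 : d * q ^ j = (q ^ (t - j) * m₀) * q ^ j := by rw [h1, ← hmdp]
        exact Nat.eq_of_mul_eq_mul_right (pow_pos hq.pos j) h2
      exact hdS ((hmemS d).2 ⟨t - j, by omega, hdval⟩)
    have hprod2 : ∏ d ∈ S, Vn m d = q ^ ∑ d ∈ S, d.totient := by
      rw [← Finset.prod_pow_eq_pow_sum]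
      refine Finset.prod_congr rfl fun d hd => ?_
      obtain ⟨i, hi, rfl⟩ := (hmemS d).1 hd
      refine Vn_eq_of_primePow (by exact Nat.mul_pos (pow_pos hq.pos i) hm₀pos) hq
        (j := t - i) (by omega) ?_
      rw [show q ^ i * m₀ * q ^ (t - i) = q ^ (t - i) * q ^ i * m₀ by ring,
        pow_sub_mul_pow q (by omega : i ≤ t), hmfac0]
    have hsum : ∑ d ∈ S, d.totient = q ^ (t - s) * m₀.totient := by
      rw [hSdef, Finset.sum_image (fun a _ b _ h => Nat.eq_of_mul_eq_mul_right hm₀pos h)]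
      have : ∀ e ∈ (q ^ (t - s)).divisors, (e * m₀).totient = e.totient * m₀.totient := by
        intro e he
        obtain ⟨i, hi, rfl⟩ := (Nat.dvd_prime_pow hq).1 (Nat.mem_divisors.1 he).1
        exact Nat.totient_mul ((hq.coprime_iff_not_dvd.2 hqm₀).pow_left i)
      rw [Finset.sum_congr rfl this, ← Finset.sum_mul, Nat.sum_totient]
    have hexp : m.totient / M₁.totient = q ^ (t - s) * m₀.totient := by
      have hphim : m.totient = M₁.totient * (q ^ (t - s) * m₀.totient) := by
        rw [← hmfac0, Nat.totient_mul ((hq.coprime_iff_not_dvd.2 hqm₀).pow_left t), hqs,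
          Nat.totient_prime_pow hq (show 0 < t by omega),
          Nat.totient_prime_pow hq (show 0 < s by omega)]
        have hpow : q ^ (t - s) * q ^ (s - 1) = q ^ (t - 1) := by
          rw [show t - s = (t - 1) - (s - 1) by omega]
          exact pow_sub_mul_pow q (by omega)
        rw [← hpow]
        ring
      rw [hphim, Nat.mul_div_cancel_left]
      exact Nat.totient_pos.2 (by omega)
    rw [hprod1, hprod2, hsum, hE, hexp]
  · -- M₁ is not a prime power: everything is 1
    have hE : (Polynomial.eval 1 (cyclotomic M₁ ℤ)).natAbs = 1 := by
      rw [Polynomial.eval_one_cyclotomic_not_prime_pow, Int.natAbs_one]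
      intro p hp k hk
      rcases Nat.eq_zero_or_pos k with rfl | hkpos
      · simp at hk; omega
      · exact hPP ⟨p, k, hp, hkpos, hk.symm⟩
    rw [hE, one_pow]
    refine Finset.prod_eq_one fun d hd => ?_
    have hddvdn : d ∣ n := (Nat.mem_divisors.1 hd).1
    have hd1 : 1 ≤ d := Nat.pos_of_dvd_of_pos hddvdn (by omega)
    have hdlt : d < m := lt_of_le_of_lt (Nat.le_of_dvd (by omega) hddvdn) hnm
    refine Vn_eq_one_of_not_primePow hd1 hdlt ?_
    intro p j hp hj hmdp
    have hdm : d ∣ m := ⟨p ^ j, hmdp⟩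
    have hmd : m / d = p ^ j := by rw [hmdp, Nat.mul_div_cancel_left _ (by omega)]
    have hM₁pj : M₁ ∣ p ^ j := hmd ▸ hM₁dvd d hddvdn hdm
    obtain ⟨i, hij, hMi⟩ := (Nat.dvd_prime_pow hp).1 hM₁pj
    refine hPP ⟨p, i, hp, ?_, hMi⟩
    rcases Nat.eq_zero_or_pos i with rfl | h
    · simp at hMi; omega
    · exact h

noncomputable def Gabs (m k : ℕ) : ℝ :=
  ∏ ξ ∈ primitiveRoots m ℂ, Complex.abs (Polynomial.eval ξ (cyclotomic k ℂ))

lemma Gabs_pos {m d : ℕ} (hd : 1 ≤ d) (hdm : d < m) : 0 < Gabs m d := by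
  refine Finset.prod_pos fun ξ hξ => ?_
  have hξm := isPrimitiveRoot_of_mem_primitiveRoots hξ
  rw [AbsoluteValue.pos_iff]
  intro h0
  haveI : NeZero ((d : ℕ) : ℂ) := ⟨by exact_mod_cast (by omega : d ≠ 0)⟩
  have h1 : IsPrimitiveRoot ξ d := isRoot_cyclotomic_iff.1 h0
  have := h1.unique hξm
  omega

lemma Gabs_rec (m n : ℕ) (hn : 1 ≤ n) (hnm : n < m) :
    ∏ d ∈ n.divisors, Gabs m d = ∏ ξ ∈ primitiveRoots m ℂ, Complex.abs (ξ ^ n - 1) := by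
  unfold Gabs
  rw [Finset.prod_comm]
  refine Finset.prod_congr rfl fun ξ _ => ?_
  rw [← map_prod, ← Polynomial.eval_prod, prod_cyclotomic_eq_X_pow_sub_one (by omega) ℂ]
  simp

lemma Gval (m : ℕ) : ∀ n, 1 ≤ n → n < m → Gabs m n = (Vn m n : ℝ) := by
  intro n
  induction n using Nat.strong_induction_on with
  | _ n ih =>
    intro hn hnm
    have hrec : ∏ d ∈ n.divisors, Gabs m d
        = (((Polynomial.eval 1 (cyclotomic (m / m.gcd n) ℤ)).natAbs : ℝ))
            ^ (Nat.totient m / Nat.totient (m / m.gcd n)) := by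
      rw [Gabs_rec m n hn hnm, Habs_eq m n (by omega) hn]
    have hstar : ∏ d ∈ n.divisors, ((Vn m d : ℝ))
        = (((Polynomial.eval 1 (cyclotomic (m / m.gcd n) ℤ)).natAbs : ℝ))
            ^ (Nat.totient m / Nat.totient (m / m.gcd n)) := by
      rw [← Nat.cast_prod]
      rw [prodV m n hn hnm]
      push_cast
      rfl
    have heq : ∏ d ∈ n.divisors, Gabs m d = ∏ d ∈ n.divisors, ((Vn m d : ℝ)) := by
      rw [hrec, hstar]
    rw [← Nat.cons_self_properDivisors (by omega : n ≠ 0), Finset.prod_cons,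
      Finset.prod_cons] at heq
    have hIH : ∀ d ∈ n.properDivisors, Gabs m d = (Vn m d : ℝ) := by
      intro d hd
      obtain ⟨hddvd, hdlt⟩ := Nat.mem_properDivisors.1 hd
      exact ih d hdlt (Nat.pos_of_dvd_of_pos hddvd (by omega)) (by omega)
    rw [Finset.prod_congr rfl hIH] at heq
    have hP : (0 : ℝ) < ∏ d ∈ n.properDivisors, ((Vn m d : ℝ)) := by
      rw [← Finset.prod_congr rfl hIH]
      refine Finset.prod_pos fun d hd => ?_
      obtain ⟨hddvd, hdlt⟩ := Nat.mem_properDivisors.1 hd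
      exact Gabs_pos (Nat.pos_of_dvd_of_pos hddvd (by omega)) (by omega)
    exact mul_right_cancel₀ (ne_of_gt hP) heq

lemma cyclotomic_zmod_pow {p n k : ℕ} (hp : p.Prime) (hn : 1 ≤ n) (hk : 1 ≤ k) :
    ∃ E : ℕ, 1 ≤ E ∧ cyclotomic (n * p ^ k) (ZMod p) = cyclotomic n (ZMod p) ^ E := by
  haveI : Fact p.Prime := ⟨hp⟩
  set v := n.factorization p with hv
  set n₀ := n / p ^ v with hn₀
  have hfac : p ^ v * n₀ = n := Nat.ordProj_mul_ordCompl_eq_self n p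
  have hpn₀ : ¬ p ∣ n₀ := Nat.not_dvd_ordCompl hp (by omega)
  have hmain : cyclotomic (n * p ^ k) (ZMod p)
      = cyclotomic n₀ (ZMod p) ^ (p ^ (v + k) - p ^ (v + k - 1)) := by
    rw [show n * p ^ k = p ^ (v + k) * n₀ by rw [← hfac, pow_add]; ring]
    exact cyclotomic_mul_prime_pow_eq (ZMod p) hpn₀ (by omega)
  rcases Nat.eq_zero_or_pos v with hv0 | hvpos
  · refine ⟨p ^ k - p ^ (k - 1), ?_, ?_⟩
    · have h1 : p ^ (k - 1) < p ^ k := Nat.pow_lt_pow_right hp.one_lt (by omega)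
      omega
    · rw [hmain, show n₀ = n by rw [← hfac, hv0, pow_zero, one_mul], hv0, zero_add]
  · refine ⟨p ^ k, Nat.one_le_iff_ne_zero.mpr (pow_pos hp.pos k).ne', ?_⟩
    have hcn : cyclotomic n (ZMod p) = cyclotomic n₀ (ZMod p) ^ (p ^ v - p ^ (v - 1)) := by
      rw [← hfac]
      exact cyclotomic_mul_prime_pow_eq (ZMod p) hpn₀ hvpos
    rw [hmain, hcn, ← pow_mul]
    congr 1
    have h1 : p ^ (v - 1) * p ^ k = p ^ (v + k - 1) := by
      rw [← pow_add]
      congr 1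
      omega
    rw [Nat.sub_mul, ← pow_add, h1]

end Aux

/-- For `m ≥ n ≥ 1`, the Smith normal form of `Φ_m(C_{Φ_n})` over `ℤ` is: the zero
matrix if `m = n`; `p·I` if `m = n·p^k` for a prime `p` and `k ≥ 1`; and the identity
matrix otherwise. -/
theorem stmt14 (m n : ℕ) (hn : 1 ≤ n) (hmn : n ≤ m) :
    letI M := Polynomial.aeval (companion (Polynomial.cyclotomic n ℤ))
      (Polynomial.cyclotomic m ℤ)
    (m = n → ∃ U V, IsUnit U.det ∧ IsUnit V.det ∧ U * M * V = 0) ∧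
    (∀ p k : ℕ, p.Prime → 1 ≤ k → m = n * p ^ k →
      ∃ U V, IsUnit U.det ∧ IsUnit V.det ∧ U * M * V = (p : ℤ) • 1) ∧
    (m ≠ n → (¬ ∃ p k : ℕ, p.Prime ∧ 1 ≤ k ∧ m = n * p ^ k) →
      ∃ U V, IsUnit U.det ∧ IsUnit V.det ∧ U * M * V = 1) := by
  have hgmonic : (cyclotomic n ℤ).Monic := cyclotomic.monic n ℤ
  have hdeg : (cyclotomic n ℤ).natDegree = n.totient := natDegree_cyclotomic n ℤ
  have hdeg1 : 1 ≤ (cyclotomic n ℤ).natDegree := by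
    rw [hdeg]; exact Nat.totient_pos.mpr hn
  set A := companion (cyclotomic n ℤ) with hA
  set M := Polynomial.aeval A (cyclotomic m ℤ) with hMdef
  have detM_natAbs : ∀ (hnm : n < m), (M.det.natAbs : ℝ) = (Vn m n : ℝ) := by
    intro hnm
    rw [hMdef, hA, detM_abs m n hn (by omega), ← Gval m n hn hnm]
    rfl
  refine ⟨?_, ?_, ?_⟩
  · rintro rfl
    have h0 : M = 0 := aeval_companion_self _ hgmonic hdeg1
    exact ⟨1, 1, by simp, by simp, by rw [Matrix.one_mul, Matrix.mul_one, h0]⟩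
  · intro p k hp hk hmeq
    haveI : Fact p.Prime := ⟨hp⟩
    have hppos := hp.pos
    have h2 : 2 ≤ p ^ k := le_trans hp.two_le (Nat.le_self_pow (by omega) p)
    have hnm : n < m := by
      rw [hmeq]
      exact (Nat.lt_mul_iff_one_lt_right (show 0 < n by omega)).2 (by omega)
    obtain ⟨E, hE1, hE⟩ := cyclotomic_zmod_pow hp hn hk
    set σ : ℤ →+* ZMod p := Int.castRingHom (ZMod p) with hσ
    have h0 : Polynomial.aeval A (cyclotomic n ℤ) = 0 := aeval_companion_self _ hgmonic hdeg1
    have haux : ∀ j : ℕ, (Polynomial.aeval A (cyclotomic j ℤ)).map ⇑σ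
        = Polynomial.aeval (A.map ⇑σ) (cyclotomic j (ZMod p)) := by
      intro j
      rw [map_aeval_matrix σ A, ← map_cyclotomic_int j (ZMod p), ← algebraMap_int_eq,
        Polynomial.aeval_map_algebraMap]
    have hmapM : M.map ⇑σ = 0 := by
      rw [hMdef, haux m, show m = n * p ^ k from hmeq, hE, map_pow]
      have hz : Polynomial.aeval (A.map ⇑σ) (cyclotomic n (ZMod p)) = 0 := by
        rw [← haux n, h0]
        ext i j
        simp
      rw [hz, zero_pow (by omega : E ≠ 0)]
    have hdvd : ∀ i j, (p : ℤ) ∣ M i j := by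
      intro i j
      have hz : σ (M i j) = 0 := by
        rw [show σ (M i j) = (M.map ⇑σ) i j from rfl, hmapM]
        rfl
      exact_mod_cast (ZMod.intCast_zmod_eq_zero_iff_dvd (M i j) p).1 hz
    set N : Matrix (Fin (cyclotomic n ℤ).natDegree) (Fin (cyclotomic n ℤ).natDegree) ℤ :=
      Matrix.of (fun i j => M i j / p) with hN
    have hMN : M = (p : ℤ) • N := by
      ext i j
      rw [Matrix.smul_apply, hN, Matrix.of_apply, smul_eq_mul]
      exact (Int.mul_ediv_cancel' (hdvd i j)).symm
    have hdetM : M.det = (p : ℤ) ^ n.totient * N.det := by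
      rw [hMN, Matrix.det_smul, Fintype.card_fin]
      exact congrArg (fun e => (p : ℤ) ^ e * N.det) hdeg
    have hMabs : M.det.natAbs = p ^ n.totient := by
      have h3 := detM_natAbs hnm
      rw [Vn_eq_of_primePow hn hp hk hmeq] at h3
      exact_mod_cast h3
    have hNdet : N.det.natAbs = 1 := by
      have h4 : M.det.natAbs = p ^ n.totient * N.det.natAbs := by
        rw [hdetM, Int.natAbs_mul, Int.natAbs_pow, Int.natAbs_natCast]
      rw [hMabs] at h4
      have hpow : 0 < p ^ n.totient := pow_pos hppos _
      exact Nat.eq_of_mul_eq_mul_left hpow (by omega)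
    have hNunit : IsUnit N.det := Int.isUnit_iff_natAbs_eq.mpr hNdet
    refine ⟨N⁻¹, 1, Matrix.isUnit_nonsing_inv_det N hNunit, by simp, ?_⟩
    rw [Matrix.mul_one, hMN, Matrix.mul_smul, Matrix.nonsing_inv_mul N hNunit]
  · intro hne hnot
    have hnm : n < m := lt_of_le_of_ne hmn (Ne.symm hne)
    have h1 : M.det.natAbs = 1 := by
      have := detM_natAbs hnm
      rw [Vn_eq_one_of_not_primePow hn hnm
        (fun p j hp hj hmeq => hnot ⟨p, j, hp, hj, hmeq⟩)] at this
      exact_mod_cast this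
    have hMunit : IsUnit M.det := Int.isUnit_iff_natAbs_eq.mpr h1
    exact ⟨M⁻¹, 1, Matrix.isUnit_nonsing_inv_det M hMunit, by simp,
      by rw [Matrix.mul_one, Matrix.nonsing_inv_mul M hMunit]⟩
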